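/- arXiv:1301.4082 — 9 statements merged into one kernel-verified Lean document; each statement's English description precedes it below -/
import Mathlib

section
/- Let ρ₁₂ be any complex matrix on ℂ² ⊗ ℂ² (a 4×4 matrix indexed by Fin 2 × Fin 2, the first factor being subsystem 1), and let ρ₂₁ be its swap reindexing. Define the 4×4 matrix S with rows indexed by n ∈ Fin 4 and columns by m ∈ Fin 4 via S_{n m} = (1/2)·tr[ρ₁₂ · (σ_m ⊗ σ_n)]. Then S = U† · R(ρ₂₁^T₁) · U. -/
open Matrix Kronecker
set_option maxHeartbeats 1000000

noncomputable section

/-- Partial transpose on the second tensor factor. -/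
def PT1 {d₂ d₁ : ℕ} (M : Matrix (Fin d₂ × Fin d₁) (Fin d₂ × Fin d₁) ℂ) :
    Matrix (Fin d₂ × Fin d₁) (Fin d₂ × Fin d₁) ℂ :=
  fun p q => M (p.1, q.2) (q.1, p.2)

/-- Realignment. -/
def realign {d₂ d₁ : ℕ} (M : Matrix (Fin d₂ × Fin d₁) (Fin d₂ × Fin d₁) ℂ) :
    Matrix (Fin d₂ × Fin d₂) (Fin d₁ × Fin d₁) ℂ :=
  fun p q => M (p.1, q.1) (p.2, q.2)

/-- Swap reindexing. -/
def swapRe {d₂ d₁ : ℕ} (ρ : Matrix (Fin d₂ × Fin d₁) (Fin d₂ × Fin d₁) ℂ) :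
    Matrix (Fin d₁ × Fin d₂) (Fin d₁ × Fin d₂) ℂ :=
  fun p q => ρ (p.2, p.1) (q.2, q.1)

/-- SWAP operator. -/
def swapOp (d : ℕ) : Matrix (Fin d × Fin d) (Fin d × Fin d) ℂ :=
  fun p q => if p.1 = q.2 ∧ p.2 = q.1 then 1 else 0

/-- Pauli matrices (with σ₀ the identity). -/
def pauli : Fin 4 → Matrix (Fin 2) (Fin 2) ℂ
  | 0 => !![1, 0; 0, 1]
  | 1 => !![0, 1; 1, 0]
  | 2 => !![0, -Complex.I; Complex.I, 0]
  | 3 => !![1, 0; 0, -1]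

/-- The matrix U with entries U_{(j,i),m} = (σ_m)_{ji}/√2. -/
def Umat : Matrix (Fin 2 × Fin 2) (Fin 4) ℂ :=
  fun p m => (1 / Real.sqrt 2 : ℝ) * pauli m p.1 p.2


/-- the link matrix S with entries S_{nm} = (1/2)·tr[ρ₁₂·(σ_m ⊗ σ_n)]
equals U† · R(ρ₂₁^T₁) · U, where ρ₂₁ is the swap reindexing of ρ₁₂. -/
theorem stmt0 (ρ₁₂ : Matrix (Fin 2 × Fin 2) (Fin 2 × Fin 2) ℂ)
    (S : Matrix (Fin 4) (Fin 4) ℂ)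
    (hS : ∀ n m : Fin 4,
      S n m = (1 / 2 : ℂ) * Matrix.trace (ρ₁₂ * (pauli m ⊗ₖ pauli n))) :
    S = Umatᴴ * realign (PT1 (swapRe ρ₁₂)) * Umat := by
  have h2 : ((Real.sqrt 2 : ℝ) : ℂ) ^ 2 = 2 := by
    rw [← Complex.ofReal_pow, Real.sq_sqrt (by norm_num)]
    norm_num
  ext n m
  rw [hS]
  fin_cases n <;> fin_cases m <;>
  · simp only [Matrix.trace, Matrix.mul_apply, Matrix.diag, Matrix.conjTranspose_apply,
      Umat, realign, PT1, swapRe, Matrix.kroneckerMap_apply,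
      Fintype.sum_prod_type, Fin.sum_univ_succ, Fin.sum_univ_zero, pauli]
    simp
    ring_nf
    simp [h2]
    try ring_nf
end
end

section
/- Let d₁, d₂ be natural numbers, let ρ₂₁ be any matrix on ℂ^{d₂} ⊗ ℂ^{d₁}, let V₁ be a unitary d₁ × d₁ complex matrix and V₂ a unitary d₂ × d₂ complex matrix, and set ρ̃₂₁ = (V₂ ⊗ V₁) · ρ₂₁ · (V₂ ⊗ V₁)†, where V₂ ⊗ V₁ is the Kronecker product. Then R(ρ₂₁^T₁) = (V₂ ⊗ V₂*)† · R(ρ̃₂₁^T₁) · (V₁ ⊗ V₁*), where V* denotes the entrywise complex conjugate. -/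
open Matrix Kronecker

noncomputable section

lemma kron_conjT {m n p q : Type*} [Fintype m] [Fintype n]
    (A : Matrix m n ℂ) (B : Matrix p q ℂ) : (A ⊗ₖ B)ᴴ = Aᴴ ⊗ₖ Bᴴ := by
  ext ⟨i, j⟩ ⟨k, l⟩
  simp [conjTranspose_apply, kroneckerMap_apply]

lemma map_star_eq {n : Type*} (V : Matrix n n ℂ) : V.map star = Vᴴᵀ := by
  ext i j
  simp [conjTranspose_apply]

lemma kron_star_unit {n : Type*} [Fintype n] [DecidableEq n]
    (V : Matrix n n ℂ) (h1 : Vᴴ * V = 1) :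
    (V ⊗ₖ V.map star)ᴴ * (V ⊗ₖ V.map star) = 1 := by
  rw [kron_conjT, map_star_eq, ← mul_kronecker_mul, h1]
  have hT : (Vᴴᵀ)ᴴ = Vᵀ := by
    ext i j; simp [conjTranspose_apply]
  rw [hT, ← transpose_mul, h1, transpose_one, one_kronecker_one]

lemma reorder {A B C D M : Type*} [Fintype A] [Fintype B] [Fintype C] [Fintype D]
    [AddCommMonoid M] (f : A → B → C → D → M) :
    ∑ a, ∑ b, ∑ c, ∑ d, f a b c d = ∑ b, ∑ d, ∑ c, ∑ a, f a b c d := by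
  rw [Finset.sum_comm]
  exact Finset.sum_congr rfl fun b _ =>
    calc ∑ a, ∑ c, ∑ d, f a b c d
        = ∑ a, ∑ d, ∑ c, f a b c d :=
          Finset.sum_congr rfl fun a _ => Finset.sum_comm
      _ = ∑ d, ∑ a, ∑ c, f a b c d := Finset.sum_comm
      _ = ∑ d, ∑ c, ∑ a, f a b c d :=
          Finset.sum_congr rfl fun d _ => Finset.sum_comm

lemma key_transform {d₁ d₂ : ℕ}
    (ρ : Matrix (Fin d₂ × Fin d₁) (Fin d₂ × Fin d₁) ℂ)
    (V₁ : Matrix (Fin d₁) (Fin d₁) ℂ) (V₂ : Matrix (Fin d₂) (Fin d₂) ℂ) :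
    realign (PT1 ((V₂ ⊗ₖ V₁) * ρ * (V₂ ⊗ₖ V₁)ᴴ)) =
      (V₂ ⊗ₖ V₂.map star) * realign (PT1 ρ) * (V₁ ⊗ₖ V₁.map star)ᴴ := by
  ext ⟨i, j⟩ ⟨α, β⟩
  simp only [realign, PT1, mul_apply, conjTranspose_apply, kroneckerMap_apply,
    Fintype.sum_prod_type, Finset.mul_sum, Finset.sum_mul, map_apply, star_mul',
    star_star]
  rw [reorder]
  refine Finset.sum_congr rfl fun δ _ => Finset.sum_congr rfl fun γ _ =>
    Finset.sum_congr rfl fun k _ => Finset.sum_congr rfl fun l _ => ?_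
  ring

/-- transformation law of the realigned partial transpose under
local unitaries: R(ρ₂₁^T₁) = (V₂ ⊗ V₂*)† · R(ρ̃₂₁^T₁) · (V₁ ⊗ V₁*). -/
theorem stmt4 {d₁ d₂ : ℕ}
    (ρ₂₁ : Matrix (Fin d₂ × Fin d₁) (Fin d₂ × Fin d₁) ℂ)
    (V₁ : Matrix (Fin d₁) (Fin d₁) ℂ) (V₂ : Matrix (Fin d₂) (Fin d₂) ℂ)
    (hV₁ : V₁ ∈ Matrix.unitaryGroup (Fin d₁) ℂ)
    (hV₂ : V₂ ∈ Matrix.unitaryGroup (Fin d₂) ℂ) :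
    realign (PT1 ρ₂₁) =
      (V₂ ⊗ₖ V₂.map star)ᴴ *
        realign (PT1 ((V₂ ⊗ₖ V₁) * ρ₂₁ * (V₂ ⊗ₖ V₁)ᴴ)) *
        (V₁ ⊗ₖ V₁.map star) := by
  have h₂ := kron_star_unit V₂ hV₂.1
  have h₁ := kron_star_unit V₁ hV₁.1
  rw [key_transform]
  rw [← Matrix.mul_assoc, ← Matrix.mul_assoc, h₂, Matrix.one_mul, Matrix.mul_assoc, h₁,
    Matrix.mul_one]
end
end

section
/- (Proposition 1.) Consider a closed path on K subsystems (K ≥ 2) with local dimensions d : ZMod K → ℕ and matrices ρ_i on ℂ^{d(i+1)} ⊗ ℂ^{d(i)} for each i ∈ ZMod K, with link matrices M_i = R(ρ_i^T₁) and path operator P = M_{K-1} ⋯ M_1 · M_0. Let V_i be a unitary d(i) × d(i) complex matrix for each i ∈ ZMod K, set ρ̃_i = (V_{i+1} ⊗ V_i) · ρ_i · (V_{i+1} ⊗ V_i)†, and let P̃ = M̃_{K-1} ⋯ M̃_1 · M̃_0 with M̃_i = R(ρ̃_i^T₁). Then P = (V₀ ⊗ V₀*)† · P̃ · (V₀ ⊗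 V₀*), where V* denotes the entrywise complex conjugate. -/
open Matrix Kronecker

noncomputable section

/-- Transport a square-block matrix along equalities of dimensions. -/
def mcast {m n m' n' : ℕ} (hm : m = m') (hn : n = n')
    (A : Matrix (Fin m × Fin m) (Fin n × Fin n) ℂ) :
    Matrix (Fin m' × Fin m') (Fin n' × Fin n') ℂ := hm ▸ hn ▸ A

/-- Partial products M_{n-1} ⋯ M₁ · M₀ of the link matrices along a closed path. -/
def pathProd {K : ℕ} (d : ZMod K → ℕ)
    (M : ∀ i : ZMod K,
      Matrix (Fin (d (i + 1)) × Fin (d (i + 1))) (Fin (d i) × Fin (d i)) ℂ) :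
    (n : ℕ) → Matrix (Fin (d (n : ZMod K)) × Fin (d (n : ZMod K)))
      (Fin (d (0 : ZMod K)) × Fin (d (0 : ZMod K))) ℂ
  | 0 => mcast (congrArg d (Nat.cast_zero (R := ZMod K)).symm) rfl 1
  | n + 1 => mcast (congrArg d (Nat.cast_add_one (R := ZMod K) n).symm) rfl
      (M (n : ZMod K) * pathProd d M n)

/-- The path operator P = M_{K-1} ⋯ M₁ · M₀, a square matrix of size d(0)². -/
def pathOp {K : ℕ} (d : ZMod K → ℕ)
    (M : ∀ i : ZMod K,
      Matrix (Fin (d (i + 1)) × Fin (d (i + 1))) (Fin (d i) × Fin (d i)) ℂ) :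
    Matrix (Fin (d (0 : ZMod K)) × Fin (d (0 : ZMod K)))
      (Fin (d (0 : ZMod K)) × Fin (d (0 : ZMod K))) ℂ :=
  mcast (congrArg d (ZMod.natCast_self K)) rfl (pathProd d M K)


lemma mcast_mul_right {m m' n k : ℕ} (hm : m = m')
    (X : Matrix (Fin m × Fin m) (Fin n × Fin n) ℂ)
    (Y : Matrix (Fin n × Fin n) (Fin k × Fin k) ℂ) :
    mcast hm rfl (X * Y) = mcast hm rfl X * Y := by subst hm; rfl

lemma mcast_W {K : ℕ} (d : ZMod K → ℕ) (V : ∀ i : ZMod K, Matrix (Fin (d i)) (Fin (d i)) ℂ)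
    {i j : ZMod K} (h : i = j) {n : ℕ}
    (X : Matrix (Fin (d i) × Fin (d i)) (Fin n × Fin n) ℂ) :
    mcast (congrArg d h) rfl ((V i ⊗ₖ (V i).map star) * X) =
      (V j ⊗ₖ (V j).map star) * mcast (congrArg d h) rfl X := by subst h; rfl

lemma kron_conjT_s5 {a b c e : ℕ} (A : Matrix (Fin a) (Fin b) ℂ) (B : Matrix (Fin c) (Fin e) ℂ) :
    (A ⊗ₖ B)ᴴ = Aᴴ ⊗ₖ Bᴴ := by
  ext ⟨i, j⟩ ⟨k, l⟩
  simp [conjTranspose_apply, kroneckerMap_apply]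

lemma map_star_conjT {a : ℕ} (A : Matrix (Fin a) (Fin a) ℂ) :
    (A.map star)ᴴ = Aᵀ := by
  ext i j; simp [conjTranspose_apply, map_apply]

lemma W_unitary {a : ℕ} (A : Matrix (Fin a) (Fin a) ℂ)
    (hA : A ∈ Matrix.unitaryGroup (Fin a) ℂ) :
    (A ⊗ₖ A.map star) ∈ Matrix.unitaryGroup (Fin a × Fin a) ℂ := by
  have h1 : Aᴴ * A = 1 := hA.1
  have h2 : A * Aᴴ = 1 := hA.2
  have hs : A.map star = Aᴴᵀ := by ext i j; simp [conjTranspose_apply, map_apply]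
  constructor
  · show (A ⊗ₖ A.map star)ᴴ * (A ⊗ₖ A.map star) = 1
    rw [kron_conjT_s5, ← mul_kronecker_mul, h1, map_star_conjT, hs, ← transpose_mul, h1,
      transpose_one, one_kronecker_one]
  · show (A ⊗ₖ A.map star) * (A ⊗ₖ A.map star)ᴴ = 1
    rw [kron_conjT_s5, ← mul_kronecker_mul, h2, map_star_conjT, hs, ← transpose_mul, h2,
      transpose_one, one_kronecker_one]

lemma link_conj {a b : ℕ} (A : Matrix (Fin a) (Fin a) ℂ) (B : Matrix (Fin b) (Fin b) ℂ)
    (ρ : Matrix (Fin a × Fin b) (Fin a × Fin b) ℂ) :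
    realign (PT1 ((A ⊗ₖ B) * ρ * (A ⊗ₖ B)ᴴ)) =
    (A ⊗ₖ A.map star) * realign (PT1 ρ) * (B ⊗ₖ B.map star)ᴴ := by
  ext ⟨i, j⟩ ⟨α, β⟩
  simp only [realign, PT1, mul_apply, kroneckerMap_apply, conjTranspose_apply,
    Fintype.sum_prod_type, Finset.mul_sum, Finset.sum_mul, map_apply, star_mul']
  simp only [star_star]
  rw [Finset.sum_comm]
  conv_lhs => enter [2, δ]; rw [Finset.sum_comm]
  conv_lhs => enter [2, δ, 2, k]; rw [Finset.sum_comm]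
  conv_lhs => enter [2, δ]; rw [Finset.sum_comm]
  refine Finset.sum_congr rfl fun δ _ => Finset.sum_congr rfl fun γ _ =>
    Finset.sum_congr rfl fun k _ => Finset.sum_congr rfl fun l _ => ?_
  ring

lemma key_lemma {K : ℕ} (d : ZMod K → ℕ)
    (V : ∀ i : ZMod K, Matrix (Fin (d i)) (Fin (d i)) ℂ)
    (hV : ∀ i, V i ∈ Matrix.unitaryGroup (Fin (d i)) ℂ)
    (M Mt : ∀ i : ZMod K,
      Matrix (Fin (d (i + 1)) × Fin (d (i + 1))) (Fin (d i) × Fin (d i)) ℂ)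
    (hlink : ∀ i, Mt i =
      (V (i + 1) ⊗ₖ (V (i + 1)).map star) * M i * (V i ⊗ₖ (V i).map star)ᴴ)
    (n : ℕ) :
    pathProd d Mt n = (V (n : ZMod K) ⊗ₖ (V (n : ZMod K)).map star) * pathProd d M n *
      (V 0 ⊗ₖ (V 0).map star)ᴴ := by
  induction n with
  | zero =>
    simp only [pathProd]
    rw [← mcast_W d V ((Nat.cast_zero (R := ZMod K)).symm), Matrix.mul_one,
      ← mcast_mul_right]
    have hw2 : (V (0:ZMod K) ⊗ₖ (V 0).map star) * (V 0 ⊗ₖ (V 0).map star)ᴴ = 1 :=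
      (W_unitary _ (hV 0)).2
    rw [hw2]
  | succ n ih =>
    simp only [pathProd]
    rw [hlink, ih]
    have hw : (V (n : ZMod K) ⊗ₖ (V (n : ZMod K)).map star)ᴴ *
        (V (n : ZMod K) ⊗ₖ (V (n : ZMod K)).map star) = 1 := (W_unitary _ (hV _)).1
    simp only [Matrix.mul_assoc]
    rw [← Matrix.mul_assoc ((V (n : ZMod K) ⊗ₖ (V (n : ZMod K)).map star)ᴴ), hw,
      Matrix.one_mul, ← Matrix.mul_assoc (M (n : ZMod K)),
      mcast_W d V ((Nat.cast_add_one (R := ZMod K) n).symm), mcast_mul_right]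


/-- Proposition 1: local unitary covariance of the path operator:
P = (V₀ ⊗ V₀*)† · P̃ · (V₀ ⊗ V₀*). -/
theorem stmt5 {K : ℕ} (hK : 2 ≤ K) (d : ZMod K → ℕ)
    (ρ : ∀ i : ZMod K,
      Matrix (Fin (d (i + 1)) × Fin (d i)) (Fin (d (i + 1)) × Fin (d i)) ℂ)
    (V : ∀ i : ZMod K, Matrix (Fin (d i)) (Fin (d i)) ℂ)
    (hV : ∀ i, V i ∈ Matrix.unitaryGroup (Fin (d i)) ℂ) :
    pathOp d (fun i => realign (PT1 (ρ i))) =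
      (V 0 ⊗ₖ (V 0).map star)ᴴ *
        pathOp d (fun i => realign (PT1
          ((V (i + 1) ⊗ₖ V i) * ρ i * (V (i + 1) ⊗ₖ V i)ᴴ))) *
        (V 0 ⊗ₖ (V 0).map star) := by
 classical
  set W : Matrix (Fin (d 0) × Fin (d 0)) (Fin (d 0) × Fin (d 0)) ℂ :=
    V 0 ⊗ₖ (V 0).map star with hW
  have hlink : ∀ i : ZMod K,
      realign (PT1 ((V (i + 1) ⊗ₖ V i) * ρ i * (V (i + 1) ⊗ₖ V i)ᴴ)) =
        (V (i + 1) ⊗ₖ (V (i + 1)).map star) * realign (PT1 (ρ i)) *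
          (V i ⊗ₖ (V i).map star)ᴴ := fun i => link_conj _ _ _
  have hP : pathOp d (fun i => realign (PT1
        ((V (i + 1) ⊗ₖ V i) * ρ i * (V (i + 1) ⊗ₖ V i)ᴴ))) =
      W * pathOp d (fun i => realign (PT1 (ρ i))) * Wᴴ := by
    unfold pathOp
    rw [key_lemma d V hV _ _ hlink K, mcast_mul_right, mcast_W d V (ZMod.natCast_self K)]
  rw [hP]
  have h1 : Wᴴ * W = 1 := (W_unitary _ (hV 0)).1
  simp only [Matrix.mul_assoc]
  rw [h1, Matrix.mul_one, ← Matrix.mul_assoc, h1, Matrix.one_mul]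
end
end

section
/- Consider a closed path on K subsystems (K ≥ 2) with local dimensions d : ZMod K → ℕ and matrices ρ_i on ℂ^{d(i+1)} ⊗ ℂ^{d(i)}, each ρ_i Hermitian, with path operator P. Then S_{d(0)} · P · S_{d(0)} = P*, where * denotes the entrywise complex conjugate; that is, P is conjugated into its complex conjugate by the SWAP operator on ℂ^{d(0)} ⊗ ℂ^{d(0)}. -/
open Matrix Kronecker

noncomputable section

lemma swap_mul {m n : ℕ} (A : Matrix (Fin m × Fin m) (Fin n × Fin n) ℂ) :
    swapOp m * A = fun p q => A (p.2, p.1) q := by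
  ext ⟨a,b⟩ q
  simp [Matrix.mul_apply, swapOp, Fintype.sum_prod_type, ite_and]

lemma mul_swap {m n : ℕ} (A : Matrix (Fin m × Fin m) (Fin n × Fin n) ℂ) :
    A * swapOp n = fun p q => A p (q.2, q.1) := by
  ext p ⟨c,e⟩
  simp [Matrix.mul_apply, swapOp, Fintype.sum_prod_type, ite_and, eq_comm]

lemma swap_sq (m : ℕ) : swapOp m * swapOp m = 1 := by
  rw [swap_mul]
  ext ⟨a,b⟩ ⟨c,e⟩
  simp [swapOp, Matrix.one_apply, Prod.ext_iff, and_comm]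

lemma key {m n : ℕ} (ρ : Matrix (Fin m × Fin n) (Fin m × Fin n) ℂ)
    (hρ : ρ.IsHermitian) :
    swapOp m * realign (PT1 ρ) * swapOp n = (realign (PT1 ρ)).map star := by
  rw [mul_swap, swap_mul]
  ext p q
  simp only [Matrix.map_apply, realign, PT1]
  exact (hρ.apply _ _).symm

lemma mcast_map {m n m' n' : ℕ} (hm : m = m') (hn : n = n')
    (A : Matrix (Fin m × Fin m) (Fin n × Fin n) ℂ) (f : ℂ → ℂ) :
    (mcast hm hn A).map f = mcast hm hn (A.map f) := by
  subst hm; subst hn; rfl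

lemma mcast_conj {m n m' n' : ℕ} (hm : m = m') (hn : n = n')
    (A : Matrix (Fin m × Fin m) (Fin n × Fin n) ℂ) :
    swapOp m' * mcast hm hn A * swapOp n' = mcast hm hn (swapOp m * A * swapOp n) := by
  subst hm; subst hn; rfl

/-- for Hermitian two-body matrices, the path operator is conjugated
into its complex conjugate by the SWAP operator: S_{d(0)} · P · S_{d(0)} = P*. -/
theorem stmt11 {K : ℕ} (hK : 2 ≤ K) (d : ZMod K → ℕ)
    (ρ : ∀ i : ZMod K,
      Matrix (Fin (d (i + 1)) × Fin (d i)) (Fin (d (i + 1)) × Fin (d i)) ℂ)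
    (hρ : ∀ i, (ρ i).IsHermitian) :
    swapOp (d 0) * pathOp d (fun i => realign (PT1 (ρ i))) * swapOp (d 0) =
      (pathOp d (fun i => realign (PT1 (ρ i)))).map star := by
  set M := fun i : ZMod K => realign (PT1 (ρ i)) with hM
  have main : ∀ n : ℕ,
      swapOp (d (n : ZMod K)) * pathProd d M n * swapOp (d 0) =
        (pathProd d M n).map star := by
    intro n
    induction n with
    | zero =>
        rw [pathProd, mcast_conj, mcast_map]
        congr 1
        rw [Matrix.mul_one, swap_sq]
        ext p q
        simp [Matrix.one_apply, apply_ite star]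
    | succ n ih =>
        rw [pathProd, mcast_conj, mcast_map]
        congr 1
        have : swapOp (d ((n : ZMod K) + 1)) * (M (n : ZMod K) * pathProd d M n) *
            swapOp (d 0) =
            (swapOp (d ((n : ZMod K) + 1)) * M (n : ZMod K) * swapOp (d (n : ZMod K))) *
            (swapOp (d (n : ZMod K)) * pathProd d M n * swapOp (d 0)) := by
          rw [Matrix.mul_assoc (swapOp (d ((n : ZMod K) + 1)) * M (n : ZMod K))]
          rw [← Matrix.mul_assoc (swapOp (d (n : ZMod K)))]
          rw [← Matrix.mul_assoc (swapOp (d (n : ZMod K)))]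
          rw [swap_sq, Matrix.one_mul]
          simp only [Matrix.mul_assoc]
        rw [this, key _ (hρ _), ih]
        congr 1
        ext p q
        simp [Matrix.mul_apply, Matrix.map_apply, star_sum, star_mul', hM]
  rw [pathOp, mcast_conj, mcast_map, main K]
end
end

section
/- (Proposition 2, non-retracing part.) Consider a closed path on K subsystems (K ≥ 2) with local dimensions d : ZMod K → ℕ and matrices ρ_i on ℂ^{d(i+1)} ⊗ ℂ^{d(i)}, each ρ_i Hermitian, with path operator P. Then every coefficient of the characteristic polynomial of P is real; equivalently, the spectrum of P is closed under complex conjugation, so each eigenvalue of P is either real or occurs together with its complex conjugate. -/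
open Matrix Kronecker

noncomputable section

namespace Stmt12Aux

open Polynomial

lemma swapOp_mul_apply {d : ℕ} {n : Type*} [Fintype n] (A : Matrix (Fin d × Fin d) n ℂ)
    (p : Fin d × Fin d) (q : n) : (swapOp d * A) p q = A (p.2, p.1) q := by
  simp [Matrix.mul_apply, swapOp, Fintype.sum_prod_type, ite_and]

lemma mul_swapOp_apply {d : ℕ} {n : Type*} [Fintype n] (A : Matrix n (Fin d × Fin d) ℂ)
    (p : n) (q : Fin d × Fin d) : (A * swapOp d) p q = A p (q.2, q.1) := by
  simp [Matrix.mul_apply, swapOp, Fintype.sum_prod_type, ite_and]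

lemma swapOp_mul_swapOp (d : ℕ) : swapOp d * swapOp d = 1 := by
  ext p q
  rw [swapOp_mul_apply]
  simp [swapOp, Matrix.one_apply, Prod.ext_iff, eq_comm, and_comm]

lemma charpoly_swap_conj {d : ℕ} (A : Matrix (Fin d × Fin d) (Fin d × Fin d) ℂ) :
    (swapOp d * A * swapOp d).charpoly = A.charpoly := by
  have hmap1 : (swapOp d).map (C : ℂ →+* ℂ[X]) * (swapOp d).map C = 1 := by
    rw [← Matrix.map_mul, swapOp_mul_swapOp, Matrix.map_one _ (map_zero C) (map_one C)]
  have hcomm : Matrix.scalar (Fin d × Fin d) (X : ℂ[X]) * (swapOp d).map C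
      = (swapOp d).map C * Matrix.scalar (Fin d × Fin d) (X : ℂ[X]) :=
    (Matrix.scalar_commute X (fun r' => Commute.all X r') _).eq
  have key : charmatrix (swapOp d * A * swapOp d)
      = (swapOp d).map C * charmatrix A * (swapOp d).map C := by
    unfold charmatrix
    simp only [RingHom.mapMatrix_apply, Matrix.map_mul]
    rw [Matrix.mul_sub, Matrix.sub_mul]
    congr 1
    rw [← hcomm, Matrix.mul_assoc, hmap1, Matrix.mul_one]
  rw [Matrix.charpoly, key, Matrix.det_mul, Matrix.det_mul, mul_comm, ← mul_assoc,
    ← Matrix.det_mul, hmap1, Matrix.det_one, one_mul, Matrix.charpoly]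

lemma mem_spectrum_iff_root {n : Type*} [Fintype n] [DecidableEq n]
    (M : Matrix n n ℂ) (μ : ℂ) : μ ∈ spectrum ℂ M ↔ M.charpoly.eval μ = 0 := by
  have hdet : M.charpoly.eval μ = (algebraMap ℂ (Matrix n n ℂ) μ - M).det := by
    have h1 : M.charpoly.eval μ = ((charmatrix M).map (Polynomial.evalRingHom μ)).det :=
      RingHom.map_det (Polynomial.evalRingHom μ) (charmatrix M)
    rw [h1]
    congr 1
    ext i j
    by_cases h : i = j <;>
      simp [charmatrix_apply, Matrix.algebraMap_matrix_apply, h, Matrix.diagonal,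
        Matrix.sub_apply]
  rw [spectrum.mem_iff, Matrix.isUnit_iff_isUnit_det, isUnit_iff_ne_zero, not_ne_iff, hdet]

lemma mcast_map {m n m' n' : ℕ} (hm : m = m') (hn : n = n')
    (A : Matrix (Fin m × Fin m) (Fin n × Fin n) ℂ) (f : ℂ → ℂ) :
    (mcast hm hn A).map f = mcast hm hn (A.map f) := by
  subst hm; subst hn; rfl

lemma swapOp_mul_mcast {m n m' n' : ℕ} (hm : m = m') (hn : n = n')
    (A : Matrix (Fin m × Fin m) (Fin n × Fin n) ℂ) :
    swapOp m' * mcast hm hn A = mcast hm hn (swapOp m * A) := by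
  subst hm; subst hn; rfl

lemma mcast_mul_swapOp {m n m' n' : ℕ} (hm : m = m') (hn : n = n')
    (A : Matrix (Fin m × Fin m) (Fin n × Fin n) ℂ) :
    mcast hm hn A * swapOp n' = mcast hm hn (A * swapOp n) := by
  subst hm; subst hn; rfl

lemma link_conj {d₂ d₁ : ℕ} (ρ : Matrix (Fin d₂ × Fin d₁) (Fin d₂ × Fin d₁) ℂ)
    (hρ : ρ.IsHermitian) :
    (realign (PT1 ρ)).map (starRingEnd ℂ)
      = swapOp d₂ * realign (PT1 ρ) * swapOp d₁ := by
  ext p q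
  rw [mul_swapOp_apply, swapOp_mul_apply]
  show (starRingEnd ℂ) (realign (PT1 ρ) p q) = _
  simp only [realign, PT1]
  exact hρ.apply _ _

lemma sandwich {a b c : ℕ} (A : Matrix (Fin c × Fin c) (Fin b × Fin b) ℂ)
    (B : Matrix (Fin b × Fin b) (Fin a × Fin a) ℂ) :
    (swapOp c * A * swapOp b) * (swapOp b * B * swapOp a)
      = swapOp c * (A * B) * swapOp a := by
  simp only [Matrix.mul_assoc]
  rw [← Matrix.mul_assoc (swapOp b) (swapOp b), swapOp_mul_swapOp, Matrix.one_mul]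

lemma pathProd_conj {K : ℕ} (d : ZMod K → ℕ)
    (M : ∀ i : ZMod K,
      Matrix (Fin (d (i + 1)) × Fin (d (i + 1))) (Fin (d i) × Fin (d i)) ℂ)
    (hM : ∀ i, (M i).map (starRingEnd ℂ) = swapOp (d (i + 1)) * M i * swapOp (d i)) :
    ∀ n : ℕ, (pathProd d M n).map (starRingEnd ℂ)
      = swapOp (d (n : ZMod K)) * pathProd d M n * swapOp (d (0 : ZMod K))
  | 0 => by
    rw [pathProd, mcast_map, swapOp_mul_mcast, mcast_mul_swapOp]
    rw [Matrix.map_one _ (map_zero _) (map_one _), Matrix.mul_one, swapOp_mul_swapOp]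
  | n + 1 => by
    rw [pathProd, mcast_map, swapOp_mul_mcast, mcast_mul_swapOp]
    rw [Matrix.map_mul, hM, pathProd_conj d M hM n, sandwich]

lemma pathOp_conj {K : ℕ} (d : ZMod K → ℕ)
    (M : ∀ i : ZMod K,
      Matrix (Fin (d (i + 1)) × Fin (d (i + 1))) (Fin (d i) × Fin (d i)) ℂ)
    (hM : ∀ i, (M i).map (starRingEnd ℂ) = swapOp (d (i + 1)) * M i * swapOp (d i)) :
    (pathOp d M).map (starRingEnd ℂ)
      = swapOp (d (0 : ZMod K)) * pathOp d M * swapOp (d (0 : ZMod K)) := by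
  rw [pathOp, mcast_map, swapOp_mul_mcast, mcast_mul_swapOp, pathProd_conj d M hM K]

end Stmt12Aux

/-- Proposition 2, non-retracing part: for Hermitian two-body
matrices, the characteristic polynomial of the path operator has real
coefficients, and its spectrum is closed under complex conjugation. -/
theorem stmt12 {K : ℕ} (hK : 2 ≤ K) (d : ZMod K → ℕ)
    (ρ : ∀ i : ZMod K,
      Matrix (Fin (d (i + 1)) × Fin (d i)) (Fin (d (i + 1)) × Fin (d i)) ℂ)
    (hρ : ∀ i, (ρ i).IsHermitian) :
    (∀ k : ℕ,
      ((pathOp d (fun i => realign (PT1 (ρ i)))).charpoly.coeff k).im = 0) ∧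
    (∀ μ : ℂ, μ ∈ spectrum ℂ (pathOp d (fun i => realign (PT1 (ρ i)))) →
      (starRingEnd ℂ) μ ∈ spectrum ℂ (pathOp d (fun i => realign (PT1 (ρ i))))) := by
  classical
  set P := pathOp d (fun i => realign (PT1 (ρ i))) with hP
  have hM : ∀ i : ZMod K, ((fun i => realign (PT1 (ρ i))) i).map (starRingEnd ℂ)
      = swapOp (d (i + 1)) * (fun i => realign (PT1 (ρ i))) i * swapOp (d i) :=
    fun i => Stmt12Aux.link_conj (ρ i) (hρ i)
  have hconj : (P.map (starRingEnd ℂ)).charpoly = P.charpoly := by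
    rw [hP, Stmt12Aux.pathOp_conj d _ hM, Stmt12Aux.charpoly_swap_conj]
  have hreal : P.charpoly.map (starRingEnd ℂ) = P.charpoly := by
    rw [← Matrix.charpoly_map P (starRingEnd ℂ), hconj]
  constructor
  · intro k
    have := congrArg (fun p => Polynomial.coeff p k) hreal
    simp only [Polynomial.coeff_map] at this
    exact Complex.conj_eq_iff_im.mp this
  · intro μ hμ
    rw [Stmt12Aux.mem_spectrum_iff_root] at hμ ⊢
    calc P.charpoly.eval ((starRingEnd ℂ) μ)
        = (P.charpoly.map (starRingEnd ℂ)).eval ((starRingEnd ℂ) μ) := by rw [hreal]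
      _ = (starRingEnd ℂ) (P.charpoly.eval μ) := by
          rw [Polynomial.eval_map, Polynomial.eval₂_at_apply]
      _ = 0 := by rw [hμ, map_zero]
end
end

section
/- (Proposition 2, retracing part.) Let L ≥ 2, let d : Fin L → ℕ be local dimensions, and for each i with i+1 < L let ρ_i be a Hermitian matrix on ℂ^{d(i+1)} ⊗ ℂ^{d(i)}, with swap reindexing ρ̂_i on ℂ^{d(i)} ⊗ ℂ^{d(i+1)}. Set M_i = R(ρ_i^T₁) (forward links) and N_i = R(ρ̂_i^T₁) (backward links). Then the fully retracing path operator P = N₀ · N₁ ⋯ N_{L-2} · M_{L-2} ⋯ M₁ · M₀ is a positive semidefinite d(0)² × d(0)² matrix. -/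
open Matrix Kronecker
open scoped ComplexOrder

noncomputable section

/-- Forward partial products M_{n-1} ⋯ M₁ · M₀ along a (non-closed) path. -/
def fwd {L : ℕ} (h0 : 0 < L) (d : Fin L → ℕ)
    (M : ∀ i : ℕ, ∀ h : i + 1 < L,
      Matrix (Fin (d ⟨i + 1, h⟩) × Fin (d ⟨i + 1, h⟩))
        (Fin (d ⟨i, Nat.lt_of_succ_lt h⟩) × Fin (d ⟨i, Nat.lt_of_succ_lt h⟩)) ℂ) :
    ∀ n : ℕ, ∀ hn : n < L,
      Matrix (Fin (d ⟨n, hn⟩) × Fin (d ⟨n, hn⟩)) (Fin (d ⟨0, h0⟩) × Fin (d ⟨0, h0⟩)) ℂ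
  | 0, _ => 1
  | n + 1, hn => M n hn * fwd h0 d M n (Nat.lt_of_succ_lt hn)

/-- Backward partial products N₀ · N₁ ⋯ N_{n-1} along a (non-closed) path. -/
def bwd {L : ℕ} (h0 : 0 < L) (d : Fin L → ℕ)
    (N : ∀ i : ℕ, ∀ h : i + 1 < L,
      Matrix (Fin (d ⟨i, Nat.lt_of_succ_lt h⟩) × Fin (d ⟨i, Nat.lt_of_succ_lt h⟩))
        (Fin (d ⟨i + 1, h⟩) × Fin (d ⟨i + 1, h⟩)) ℂ) :
    ∀ n : ℕ, ∀ hn : n < L,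
      Matrix (Fin (d ⟨0, h0⟩) × Fin (d ⟨0, h0⟩)) (Fin (d ⟨n, hn⟩) × Fin (d ⟨n, hn⟩)) ℂ
  | 0, _ => 1
  | n + 1, hn => bwd h0 d N n (Nat.lt_of_succ_lt hn) * N n hn


lemma Nconj {d₂ d₁ : ℕ} (ρ : Matrix (Fin d₂ × Fin d₁) (Fin d₂ × Fin d₁) ℂ)
    (hρ : ρ.IsHermitian) :
    realign (PT1 (swapRe ρ)) = (realign (PT1 ρ))ᴴ := by
  ext ⟨α, β⟩ ⟨i, j⟩
  show (swapRe ρ) (α, j) (β, i) = _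
  show ρ (j, α) (i, β) = star (ρ (i, β) (j, α))
  conv_lhs => rw [← hρ]
  rfl

lemma bwd_eq_fwd_conj {L : ℕ} (h0 : 0 < L) (d : Fin L → ℕ)
    (M : ∀ i : ℕ, ∀ h : i + 1 < L,
      Matrix (Fin (d ⟨i + 1, h⟩) × Fin (d ⟨i + 1, h⟩))
        (Fin (d ⟨i, Nat.lt_of_succ_lt h⟩) × Fin (d ⟨i, Nat.lt_of_succ_lt h⟩)) ℂ) :
    ∀ n : ℕ, ∀ hn : n < L,
      bwd h0 d (fun i h => (M i h)ᴴ) n hn = (fwd h0 d M n hn)ᴴ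
  | 0, _ => by simp [bwd, fwd]
  | n + 1, hn => by
      rw [bwd, fwd, Matrix.conjTranspose_mul,
        bwd_eq_fwd_conj h0 d M n (Nat.lt_of_succ_lt hn)]

/-- Proposition 2, retracing part: the fully retracing path operator
P = N₀ ⋯ N_{L-2} · M_{L-2} ⋯ M₀ built from Hermitian two-body matrices is
positive semidefinite. -/
theorem stmt13 {L : ℕ} (hL : 2 ≤ L) (d : Fin L → ℕ)
    (ρ : ∀ i : ℕ, ∀ h : i + 1 < L,
      Matrix (Fin (d ⟨i + 1, h⟩) × Fin (d ⟨i, Nat.lt_of_succ_lt h⟩))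
        (Fin (d ⟨i + 1, h⟩) × Fin (d ⟨i, Nat.lt_of_succ_lt h⟩)) ℂ)
    (hρ : ∀ i h, (ρ i h).IsHermitian) :
    Matrix.PosSemidef
      (bwd (lt_of_lt_of_le two_pos hL) d
          (fun i h => realign (PT1 (swapRe (ρ i h)))) (L - 1)
          (Nat.sub_lt_self one_pos (le_trans one_le_two hL)) *
        fwd (lt_of_lt_of_le two_pos hL) d
          (fun i h => realign (PT1 (ρ i h))) (L - 1)
          (Nat.sub_lt_self one_pos (le_trans one_le_two hL))) := by
  have hN : (fun i h => realign (PT1 (swapRe (ρ i h))))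
      = fun i h => (realign (PT1 (ρ i h)))ᴴ := by
    funext i h; exact Nconj _ (hρ i h)
  rw [hN, bwd_eq_fwd_conj]
  exact Matrix.posSemidef_conjTranspose_mul_self _
end
end

section
/- Let ψ : Fin 2 × Fin 2 → ℂ be a unit vector (a pure state of two qubits), let ρ₁₂ be the rank-one projection with entries (ρ₁₂)_{u,v} = ψ_u · conj(ψ_v), and let ρ₂₁ be its swap reindexing. Let τ = |Σ_{i,j,k,l} ψ_{(i,j)} (σ₂)_{i k} (σ₂)_{j l} ψ_{(k,l)}|² be the two-tangle (the square of the concurrence). Then det[R(ρ₁₂^T₁) · R(ρ₂₁^T₁)] = (τ/4)⁴. -/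
open Matrix Kronecker

noncomputable section

private lemma det_prod_eq (M : Matrix (Fin 2 × Fin 2) (Fin 2 × Fin 2) ℂ) :
    M.det = Matrix.det !![M (0,0) (0,0), M (0,0) (0,1), M (0,0) (1,0), M (0,0) (1,1);
      M (0,1) (0,0), M (0,1) (0,1), M (0,1) (1,0), M (0,1) (1,1);
      M (1,0) (0,0), M (1,0) (0,1), M (1,0) (1,0), M (1,0) (1,1);
      M (1,1) (0,0), M (1,1) (0,1), M (1,1) (1,0), M (1,1) (1,1)] := by
  rw [← Matrix.det_reindex_self finProdFinEquiv M]
  congr 1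
  ext i j
  fin_cases i <;> fin_cases j <;> rfl

private lemma det_fin_four' (A : Matrix (Fin 4) (Fin 4) ℂ) :
    A.det = A 0 0*A 1 1*A 2 2*A 3 3 - A 0 0*A 1 1*A 2 3*A 3 2 - A 0 0*A 1 2*A 2 1*A 3 3 + A 0 0*A 1 2*A 2 3*A 3 1 + A 0 0*A 1 3*A 2 1*A 3 2 - A 0 0*A 1 3*A 2 2*A 3 1 - A 0 1*A 1 0*A 2 2*A 3 3 + A 0 1*A 1 0*A 2 3*A 3 2 + A 0 1*A 1 2*A 2 0*A 3 3 - A 0 1*A 1 2*A 2 3*A 3 0 - A 0 1*A 1 3*A 2 0*A 3 2 + A 0 1*A 1 3*A 2 2*A 3 0 + A 0 2*A 1 0*A 2 1*A 3 3 - A 0 2*A 1 0*A 2 3*A 3 1 - A 0 2*A 1 1*A 2 0*A 3 3 + A 0 2*A 1 1*A 2 3*A 3 0 + A 0 2*A 1 3*A 2 0*A 3 1 - A 0 2*A 1 3*A 2 1*A 3 0 - A 0 3*A 1 0*A 2 1*A 3 2 + A 0 3*A 1 0*A 2 2*A 3 1 + A 0 3*A 1 1*A 2 0*A 3 2 - A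 0 3*A 1 1*A 2 2*A 3 0 - A 0 3*A 1 2*A 2 0*A 3 1 + A 0 3*A 1 2*A 2 1*A 3 0 := by
  simp [Matrix.det_succ_row_zero, Fin.sum_univ_succ, Fin.succAbove]
  ring

private lemma detL1 (a b c d a' b' c' d' : ℂ) :
    Matrix.det !![a*a', b*a', a*b', b*b'; a*c', b*c', a*d', b*d';
      c*a', d*a', c*b', d*b'; c*c', d*c', c*d', d*d']
      = -((a*d - b*c)^2 * (a'*d' - b'*c')^2) := by
  rw [det_fin_four']
  norm_num [Matrix.cons_val_one, Matrix.cons_val_zero]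
  simp only [Matrix.cons_val_succ, Fin.succ_zero_eq_one, Fin.succ_one_eq_two, Matrix.cons_val_two, Matrix.cons_val_three, Matrix.cons_val_one, Matrix.cons_val_zero, Matrix.vecHead, Matrix.vecTail, Function.comp]
  ring

private lemma detL2 (a b c d a' b' c' d' : ℂ) :
    Matrix.det !![a*a', c*a', a*c', c*c'; a*b', c*b', a*d', c*d';
      b*a', d*a', b*c', d*c'; b*b', d*b', b*d', d*d']
      = -((a*d - b*c)^2 * (a'*d' - b'*c')^2) := by
  rw [det_fin_four']
  norm_num [Matrix.cons_val_one, Matrix.cons_val_zero]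
  simp only [Matrix.cons_val_succ, Fin.succ_zero_eq_one, Fin.succ_one_eq_two, Matrix.cons_val_two, Matrix.cons_val_three, Matrix.cons_val_one, Matrix.cons_val_zero, Matrix.vecHead, Matrix.vecTail, Function.comp]
  ring

/-- for a two-qubit pure state ψ with density matrix ρ₁₂,
det[R(ρ₁₂^T₁)·R(ρ₂₁^T₁)] = (τ/4)⁴ where τ is the two-tangle. -/
theorem stmt14 (ψ : Fin 2 × Fin 2 → ℂ)
    (hψ : ∑ u : Fin 2 × Fin 2, ‖ψ u‖ ^ 2 = 1)
    (ρ₁₂ : Matrix (Fin 2 × Fin 2) (Fin 2 × Fin 2) ℂ)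
    (hρ : ∀ u v, ρ₁₂ u v = ψ u * (starRingEnd ℂ) (ψ v))
    (τ : ℝ)
    (hτ : τ = ‖∑ i : Fin 2, ∑ j : Fin 2, ∑ k : Fin 2, ∑ l : Fin 2,
      ψ (i, j) * pauli 2 i k * pauli 2 j l * ψ (k, l)‖ ^ 2) :
    (realign (PT1 ρ₁₂) * realign (PT1 (swapRe ρ₁₂))).det = ((τ : ℂ) / 4) ^ 4 := by
  clear hψ
  have hw : (∑ i : Fin 2, ∑ j : Fin 2, ∑ k : Fin 2, ∑ l : Fin 2,
      ψ (i, j) * pauli 2 i k * pauli 2 j l * ψ (k, l))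
      = 2 * (ψ (0,1) * ψ (1,0)) - 2 * (ψ (0,0) * ψ (1,1)) := by
    simp [Fin.sum_univ_two, pauli]
    ring_nf
    linear_combination (2 * (ψ (0,0) * ψ (1,1) - ψ (0,1) * ψ (1,0))) * Complex.I_sq
  have hτ' : ((τ : ℝ) : ℂ)
      = (2 * (ψ (0,1) * ψ (1,0)) - 2 * (ψ (0,0) * ψ (1,1)))
        * (starRingEnd ℂ) (2 * (ψ (0,1) * ψ (1,0)) - 2 * (ψ (0,0) * ψ (1,1))) := by
    rw [hτ, hw, Complex.sq_norm]
    exact (Complex.mul_conj _).symm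
  rw [Matrix.det_mul, det_prod_eq (realign (PT1 ρ₁₂)),
    det_prod_eq (realign (PT1 (swapRe ρ₁₂))), hτ']
  simp only [realign, PT1, swapRe, hρ]
  rw [detL1 (ψ (0,0)) (ψ (0,1)) (ψ (1,0)) (ψ (1,1))
      ((starRingEnd ℂ) (ψ (0,0))) ((starRingEnd ℂ) (ψ (0,1)))
      ((starRingEnd ℂ) (ψ (1,0))) ((starRingEnd ℂ) (ψ (1,1))),
    detL2 (ψ (0,0)) (ψ (0,1)) (ψ (1,0)) (ψ (1,1))
      ((starRingEnd ℂ) (ψ (0,0))) ((starRingEnd ℂ) (ψ (0,1)))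
      ((starRingEnd ℂ) (ψ (1,0))) ((starRingEnd ℂ) (ψ (1,1)))]
  simp only [map_sub, _root_.map_mul, map_ofNat]
  ring
end
end

section
/- Let d₁, d₂, d₃ be natural numbers, let φ : Fin d₁ × Fin d₂ → ℂ and χ : Fin d₃ → ℂ be unit vectors, and let ψ = φ ⊗ χ be the biseparable tripartite pure state ψ_{(i,j,k)} = φ_{(i,j)} · χ_k, with global density matrix ρ the rank-one projection onto ψ. Let ρ₁₂, ρ₂₃, ρ₁₃ be the two-party reduced density matrices of ρ (obtained by partial trace over the remaining subsystem), let ρ₂₁, ρ₃₂ be the swap reindexings of ρ₁₂, ρ₂₃ respectively, and form the path operator P = R(ρ₁₃^T₁) · R(ρ₃₂^T₁) · R(ρ₂₁^T₁) on ℂ^{d₁²}. Then for every natural number n ≥ 1, tr(Pⁿ) = (tr[(ρ₁₂^T₁)³])ⁿ; in particular P has at most one nonzero eigenvalue, equal to tr[(ρ₁₂^T₁)³]. -/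
open Matrix Kronecker

noncomputable section

namespace Stmt15Aux

lemma vecMulVec_mul_right {n m p : Type*} [Fintype m] (u : n → ℂ) (v : m → ℂ)
    (C : Matrix m p ℂ) : vecMulVec u v * C = vecMulVec u (v ᵥ* C) := by
  ext i j
  simp only [mul_apply, vecMulVec_apply, vecMul, dotProduct, Finset.mul_sum]
  exact Finset.sum_congr rfl fun r _ => by ring

lemma vecMulVec_mul_vecMulVec {n m p : Type*} [Fintype m] (u : n → ℂ) (v a : m → ℂ)
    (b : p → ℂ) : vecMulVec u v * vecMulVec a b = (v ⬝ᵥ a) • vecMulVec u b := by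
  ext i j
  simp only [mul_apply, vecMulVec_apply, Matrix.smul_apply, smul_eq_mul, dotProduct, Finset.sum_mul]
  exact Finset.sum_congr rfl fun r _ => by ring

lemma trace_vecMulVec {n : Type*} [Fintype n] (u v : n → ℂ) :
    (vecMulVec u v).trace = u ⬝ᵥ v := by
  simp [trace, Matrix.diag, vecMulVec_apply, dotProduct]

lemma vecMulVec_pow {n : Type*} [Fintype n] [DecidableEq n] (u v : n → ℂ) (m : ℕ) :
    (vecMulVec u v) ^ (m + 1) = (v ⬝ᵥ u) ^ m • vecMulVec u v := by
  induction m with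
  | zero => simp
  | succ m ih =>
    rw [pow_succ, ih, smul_mul_assoc, vecMulVec_mul_vecMulVec, smul_smul, ← pow_succ]

lemma trace_mul_expand {n : Type*} [Fintype n] (A B : Matrix n n ℂ) :
    (A * B).trace = ∑ p, ∑ q, A p q * B q p := by
  simp [trace, Matrix.diag, mul_apply]

end Stmt15Aux

open Stmt15Aux

/-- for a biseparable pure state ψ = φ₁₂ ⊗ χ₃, the path operator
P = R(ρ₁₃^T₃)·R(ρ₃₂^T₂)·R(ρ₂₁^T₁) satisfies tr(Pⁿ) = (tr[(ρ₁₂^T₂)³])ⁿ for all n ≥ 1;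
in particular every nonzero eigenvalue of P equals tr[(ρ₁₂^T₂)³]. -/
theorem stmt15 {d₁ d₂ d₃ : ℕ}
    (φ : Fin d₁ × Fin d₂ → ℂ) (χ : Fin d₃ → ℂ)
    (hφ : ∑ u : Fin d₁ × Fin d₂, ‖φ u‖ ^ 2 = 1)
    (hχ : ∑ k : Fin d₃, ‖χ k‖ ^ 2 = 1)
    (ψ : Fin d₁ × Fin d₂ × Fin d₃ → ℂ)
    (hψ : ∀ i j k, ψ (i, j, k) = φ (i, j) * χ k)
    (ρ : Matrix (Fin d₁ × Fin d₂ × Fin d₃) (Fin d₁ × Fin d₂ × Fin d₃) ℂ)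
    (hρ : ∀ u v, ρ u v = ψ u * (starRingEnd ℂ) (ψ v))
    (ρ₁₂ : Matrix (Fin d₁ × Fin d₂) (Fin d₁ × Fin d₂) ℂ)
    (hρ₁₂ : ∀ i j i' j', ρ₁₂ (i, j) (i', j') = ∑ k, ρ (i, j, k) (i', j', k))
    (ρ₂₃ : Matrix (Fin d₂ × Fin d₃) (Fin d₂ × Fin d₃) ℂ)
    (hρ₂₃ : ∀ j k j' k', ρ₂₃ (j, k) (j', k') = ∑ i, ρ (i, j, k) (i, j', k'))
    (ρ₁₃ : Matrix (Fin d₁ × Fin d₃) (Fin d₁ × Fin d₃) ℂ)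
    (hρ₁₃ : ∀ i k i' k', ρ₁₃ (i, k) (i', k') = ∑ j, ρ (i, j, k) (i', j, k'))
    (P : Matrix (Fin d₁ × Fin d₁) (Fin d₁ × Fin d₁) ℂ)
    (hP : P = realign (PT1 ρ₁₃) * realign (PT1 (swapRe ρ₂₃)) *
      realign (PT1 (swapRe ρ₁₂))) :
    (∀ n : ℕ, 1 ≤ n → (P ^ n).trace = ((PT1 ρ₁₂) ^ 3).trace ^ n) ∧
    (∀ μ ∈ spectrum ℂ P, μ ≠ 0 → μ = ((PT1 ρ₁₂) ^ 3).trace) := by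
  classical
  -- normalization of χ
  have hχ' : ∑ k, χ k * (starRingEnd ℂ) (χ k) = 1 := by
    have h1 : ∀ k, χ k * (starRingEnd ℂ) (χ k) = ((‖χ k‖ ^ 2 : ℝ) : ℂ) := fun k => by
      rw [Complex.mul_conj, Complex.sq_norm]
    rw [Finset.sum_congr rfl fun k _ => h1 k, ← Complex.ofReal_sum, hχ, Complex.ofReal_one]
  set τ : Matrix (Fin d₁) (Fin d₁) ℂ :=
    fun a b => ∑ j, φ (a, j) * (starRingEnd ℂ) (φ (b, j)) with hτ
  set σm : Matrix (Fin d₂) (Fin d₂) ℂ :=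
    fun b a => ∑ x, φ (x, b) * (starRingEnd ℂ) (φ (x, a)) with hσ
  set f : Fin d₁ × Fin d₁ → ℂ := fun p => τ p.1 p.2 with hfd
  set g : Fin d₃ × Fin d₃ → ℂ := fun p => χ p.2 * (starRingEnd ℂ) (χ p.1) with hgd
  set b₁ : Fin d₃ × Fin d₃ → ℂ := fun p => χ p.1 * (starRingEnd ℂ) (χ p.2) with hb₁d
  set b₂ : Fin d₂ × Fin d₂ → ℂ := fun p => σm p.2 p.1 with hb₂d
  set w : Fin d₁ × Fin d₁ → ℂ := fun p => (τ * τ) p.2 p.1 with hwd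
  -- key inner identity
  have innerkey : ∀ e e' : Fin d₁,
      (∑ j, ∑ j', σm j' j * (φ (e', j) * (starRingEnd ℂ) (φ (e, j')))) = (τ * τ) e' e := by
    intro e e'
    calc (∑ j, ∑ j', σm j' j * (φ (e', j) * (starRingEnd ℂ) (φ (e, j'))))
        = ∑ j, ∑ j', ∑ x, (φ (x, j') * (starRingEnd ℂ) (φ (x, j))) *
            (φ (e', j) * (starRingEnd ℂ) (φ (e, j'))) := by
          refine Finset.sum_congr rfl fun j _ => Finset.sum_congr rfl fun j' _ => ?_
          rw [hσ, Finset.sum_mul]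
      _ = ∑ j, ∑ x, ∑ j', (φ (x, j') * (starRingEnd ℂ) (φ (x, j))) *
            (φ (e', j) * (starRingEnd ℂ) (φ (e, j'))) := by
          exact Finset.sum_congr rfl fun j _ => Finset.sum_comm
      _ = ∑ x, ∑ j, ∑ j', (φ (x, j') * (starRingEnd ℂ) (φ (x, j))) *
            (φ (e', j) * (starRingEnd ℂ) (φ (e, j'))) := Finset.sum_comm
      _ = (τ * τ) e' e := by
          rw [mul_apply]
          refine Finset.sum_congr rfl fun x _ => ?_
          rw [hτ]
          simp only
          rw [Finset.sum_mul_sum]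
          exact Finset.sum_congr rfl fun j _ => Finset.sum_congr rfl fun j' _ => by ring
  -- entrywise formulas
  have hA : realign (PT1 ρ₁₃) = vecMulVec f g := by
    ext ⟨i, i'⟩ ⟨k, k'⟩
    show ρ₁₃ (i, k') (i', k) = f (i, i') * g (k, k')
    rw [hρ₁₃]
    simp only [hρ, hψ, hfd, hgd, hτ, _root_.map_mul]
    rw [Finset.sum_mul]
    exact Finset.sum_congr rfl fun j _ => by ring
  have hB : realign (PT1 (swapRe ρ₂₃)) = vecMulVec b₁ b₂ := by
    ext ⟨k, k'⟩ ⟨j, j'⟩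
    show ρ₂₃ (j', k) (j, k') = b₁ (k, k') * b₂ (j, j')
    rw [hρ₂₃]
    simp only [hρ, hψ, hb₁d, hb₂d, hσ, _root_.map_mul]
    rw [Finset.mul_sum]
    exact Finset.sum_congr rfl fun x _ => by ring
  have hC : ∀ j j' e e', realign (PT1 (swapRe ρ₁₂)) (j, j') (e, e')
      = φ (e', j) * (starRingEnd ℂ) (φ (e, j')) := by
    intro j j' e e'
    show ρ₁₂ (e', j) (e, j') = _
    rw [hρ₁₂]
    calc (∑ k, ρ (e', j, k) (e, j', k))
        = (φ (e', j) * (starRingEnd ℂ) (φ (e, j'))) * ∑ k, χ k * (starRingEnd ℂ) (χ k) := by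
          rw [Finset.mul_sum]
          exact Finset.sum_congr rfl fun k _ => by simp only [hρ, hψ, _root_.map_mul]; ring
      _ = _ := by rw [hχ', mul_one]
  have hgb : g ⬝ᵥ b₁ = 1 := by
    have : g ⬝ᵥ b₁ = (∑ k, χ k * (starRingEnd ℂ) (χ k)) * ∑ k, χ k * (starRingEnd ℂ) (χ k) := by
      rw [dotProduct, Fintype.sum_prod_type, Finset.sum_mul_sum]
      exact Finset.sum_congr rfl fun k _ => Finset.sum_congr rfl fun k' _ => by
        simp only [hgd, hb₁d]; ring
    rw [this, hχ', mul_one]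
  have hvm : b₂ ᵥ* realign (PT1 (swapRe ρ₁₂)) = w := by
    funext q
    obtain ⟨e, e'⟩ := q
    rw [hwd]
    simp only
    rw [← innerkey e e', vecMul, dotProduct, Fintype.sum_prod_type]
    exact Finset.sum_congr rfl fun j _ => Finset.sum_congr rfl fun j' _ => by
      rw [hC j j' e e', hb₂d]
  have hPw : P = vecMulVec f w := by
    rw [hP, hA, hB, Stmt15Aux.vecMulVec_mul_vecMulVec, hgb, one_smul, vecMulVec_mul_right, hvm]
  -- the trace of (PT1 ρ₁₂)^3 equals trace (τ^3) equals w ⬝ᵥ f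
  have hG : ∀ p q : Fin d₁ × Fin d₂, (PT1 ρ₁₂) p q
      = φ (p.1, q.2) * (starRingEnd ℂ) (φ (q.1, p.2)) := by
    rintro ⟨i, j⟩ ⟨i', j'⟩
    show ρ₁₂ (i, j') (i', j) = _
    rw [hρ₁₂]
    calc (∑ k, ρ (i, j', k) (i', j, k))
        = (φ (i, j') * (starRingEnd ℂ) (φ (i', j))) * ∑ k, χ k * (starRingEnd ℂ) (χ k) := by
          rw [Finset.mul_sum]
          exact Finset.sum_congr rfl fun k _ => by simp only [hρ, hψ, _root_.map_mul]; ring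
      _ = _ := by rw [hχ', mul_one]
  have hGG : ∀ p q : Fin d₁ × Fin d₂, (PT1 ρ₁₂ * PT1 ρ₁₂) p q = τ p.1 q.1 * σm q.2 p.2 := by
    rintro ⟨i, j⟩ ⟨i'', j''⟩
    rw [mul_apply, Fintype.sum_prod_type]
    calc (∑ i' : Fin d₁, ∑ j' : Fin d₂, (PT1 ρ₁₂) (i, j) (i', j') * (PT1 ρ₁₂) (i', j') (i'', j''))
        = ∑ j' : Fin d₂, ∑ i' : Fin d₁,
            (PT1 ρ₁₂) (i, j) (i', j') * (PT1 ρ₁₂) (i', j') (i'', j'') := Finset.sum_comm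
      _ = τ i i'' * σm j'' j := by
          rw [hτ, hσ]
          simp only
          rw [Finset.sum_mul_sum]
          refine Finset.sum_congr rfl fun j' _ => Finset.sum_congr rfl fun i' _ => ?_
          rw [hG, hG]
          simp only
          ring
  have htr3 : ((PT1 ρ₁₂) ^ 3).trace = (τ * τ * τ).trace := by
    have h3 : (PT1 ρ₁₂) ^ 3 = (PT1 ρ₁₂ * PT1 ρ₁₂) * PT1 ρ₁₂ := by
      rw [pow_succ, sq]
    rw [h3, trace_mul_expand]
    calc (∑ p : Fin d₁ × Fin d₂, ∑ q : Fin d₁ × Fin d₂,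
            (PT1 ρ₁₂ * PT1 ρ₁₂) p q * (PT1 ρ₁₂) q p)
        = ∑ p : Fin d₁ × Fin d₂, ∑ q : Fin d₁ × Fin d₂,
            (τ p.1 q.1 * σm q.2 p.2) * (φ (q.1, p.2) * (starRingEnd ℂ) (φ (p.1, q.2))) := by
          refine Finset.sum_congr rfl fun p _ => Finset.sum_congr rfl fun q _ => ?_
          rw [hGG, hG]
      _ = ∑ i : Fin d₁, ∑ i'' : Fin d₁, τ i i'' *
            ∑ j, ∑ j'', σm j'' j * (φ (i'', j) * (starRingEnd ℂ) (φ (i, j''))) := by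
          simp only [Fintype.sum_prod_type]
          refine Finset.sum_congr rfl fun i _ => ?_
          rw [Finset.sum_comm]
          refine Finset.sum_congr rfl fun i'' _ => ?_
          rw [Finset.mul_sum]
          refine Finset.sum_congr rfl fun j _ => ?_
          rw [Finset.mul_sum]
          exact Finset.sum_congr rfl fun j'' _ => by ring
      _ = ∑ i : Fin d₁, ∑ i'' : Fin d₁, τ i i'' * (τ * τ) i'' i := by
          refine Finset.sum_congr rfl fun i _ => Finset.sum_congr rfl fun i'' _ => ?_
          rw [innerkey]
      _ = (τ * τ * τ).trace := by
          rw [trace_mul_expand, Finset.sum_comm]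
          exact Finset.sum_congr rfl fun a _ => Finset.sum_congr rfl fun b _ => by ring
  have hdot : w ⬝ᵥ f = (τ * τ * τ).trace := by
    rw [trace_mul_expand, dotProduct, Fintype.sum_prod_type, Finset.sum_comm]
  have hfw : f ⬝ᵥ w = (τ * τ * τ).trace := by rw [dotProduct_comm]; exact hdot
  constructor
  · intro n hn
    obtain ⟨m, rfl⟩ := Nat.exists_eq_add_of_le' hn
    rw [hPw, vecMulVec_pow, trace_smul, Stmt15Aux.trace_vecMulVec, hdot, hfw, smul_eq_mul, htr3,
      ← pow_succ]
  · intro μ hμ hμ0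
    rw [htr3]
    have hPP : P * P = (τ * τ * τ).trace • P := by
      rw [hPw, Stmt15Aux.vecMulVec_mul_vecMulVec, hdot]
    have hsp : μ ∈ spectrum ℂ (Matrix.toLinAlgEquiv' P) := by
      rw [AlgEquiv.spectrum_eq]; exact hμ
    obtain ⟨v, hv⟩ := Module.End.HasEigenvalue.exists_hasEigenvector
      (Module.End.hasEigenvalue_iff_mem_spectrum.mpr hsp)
    have hv2 : P.mulVec v = μ • v := by
      have := hv.apply_eq_smul
      rwa [Matrix.toLinAlgEquiv'_apply] at this
    have hq : (μ * μ) • v = ((τ * τ * τ).trace * μ) • v := by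
      have h1 : (P * P).mulVec v = (μ * μ) • v := by
        rw [← Matrix.mulVec_mulVec, hv2, Matrix.mulVec_smul, hv2, smul_smul]
      rw [← h1, hPP, Matrix.smul_mulVec, hv2, smul_smul]
    have h2 : μ * μ = (τ * τ * τ).trace * μ := smul_left_injective ℂ hv.right hq
    exact mul_right_cancel₀ hμ0 h2
end
end

section
/- Let d₁, d₂, d₃ be natural numbers and let a : Fin d₁ → ℂ, b : Fin d₂ → ℂ, c : Fin d₃ → ℂ be unit vectors, and let ψ be the fully separable tripartite pure state ψ_{(i,j,k)} = a_i · b_j · c_k, with global density matrix ρ the rank-one projection onto ψ. Let ρ₁₂, ρ₂₃, ρ₁₃ be the two-party reduced density matrices of ρ, and ρ₂₁, ρ₃₂ the swap reindexings of ρ₁₂, ρ₂₃. Then the path operator P = R(ρ₁₃^T₁) · R(ρ₃₂^T₁) · R(ρ₂₁^T₁) satisfies tr(Pⁿ) = 1 for every natural number n ≥ 1, and likewise the path operator P' = (R(ρ₁₂^T₁) · R(ρ₂₁^T₁))² satisfies tr(P'ⁿ) = 1 for every n ≥ 1; in particular all eigenvalues of P and of P' are zero except a single eigenvalue equal to 1.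 -/
open Matrix Kronecker

noncomputable section

private lemma stmt17_vv_mul_vv {l m n : Type*} [Fintype m] (v : l → ℂ) (w : m → ℂ) (v' : m → ℂ) (w' : n → ℂ) :
    Matrix.vecMulVec v w * Matrix.vecMulVec v' w' =
      (∑ x, w x * v' x) • Matrix.vecMulVec v w' := by
  ext i j
  simp only [Matrix.mul_apply, Matrix.vecMulVec_apply, Matrix.smul_apply, smul_eq_mul]
  rw [Finset.sum_mul]
  exact Finset.sum_congr rfl fun x _ => by ring

private lemma stmt17_ip_one {d : ℕ} (v : Fin d → ℂ) (hv : ∑ i, v i * (starRingEnd ℂ) (v i) = 1) :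
    ∑ x : Fin d × Fin d,
      ((starRingEnd ℂ) (v x.1) * v x.2) * (v x.1 * (starRingEnd ℂ) (v x.2)) = 1 := by
  have hv' : ∑ i, (starRingEnd ℂ) (v i) * v i = 1 := by
    rw [← hv]; exact Finset.sum_congr rfl fun i _ => mul_comm _ _
  rw [Fintype.sum_prod_type]
  calc (∑ x, ∑ y, ((starRingEnd ℂ) (v x) * v y) * (v x * (starRingEnd ℂ) (v y)))
      = (∑ x, (starRingEnd ℂ) (v x) * v x) * (∑ y, v y * (starRingEnd ℂ) (v y)) := by
        rw [Finset.sum_mul_sum]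
        exact Finset.sum_congr rfl fun x _ => Finset.sum_congr rfl fun y _ => by ring
    _ = 1 := by rw [hv', hv, one_mul]

private lemma stmt17_sum_norm_one {d : ℕ} (v : Fin d → ℂ) (hv : ∑ i, ‖v i‖ ^ 2 = 1) :
    ∑ i, v i * (starRingEnd ℂ) (v i) = 1 := by
  have h : ∀ i, v i * (starRingEnd ℂ) (v i) = ((‖v i‖ ^ 2 : ℝ) : ℂ) := by
    intro i; rw [Complex.mul_conj, Complex.sq_norm]
  rw [Finset.sum_congr rfl fun i _ => h i, ← Complex.ofReal_sum, hv, Complex.ofReal_one]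

/-- for a fully separable tripartite pure state ψ = a ⊗ b ⊗ c,
the path operators P = R(ρ₁₃^T₃)·R(ρ₃₂^T₂)·R(ρ₂₁^T₁) and
P' = (R(ρ₁₂^T₂)·R(ρ₂₁^T₁))² satisfy tr(Pⁿ) = tr(P'ⁿ) = 1 for all n ≥ 1;
in particular all their eigenvalues are zero except a single eigenvalue 1. -/
theorem stmt17 {d₁ d₂ d₃ : ℕ}
    (a : Fin d₁ → ℂ) (b : Fin d₂ → ℂ) (c : Fin d₃ → ℂ)
    (ha : ∑ i : Fin d₁, ‖a i‖ ^ 2 = 1)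
    (hb : ∑ j : Fin d₂, ‖b j‖ ^ 2 = 1)
    (hc : ∑ k : Fin d₃, ‖c k‖ ^ 2 = 1)
    (ψ : Fin d₁ × Fin d₂ × Fin d₃ → ℂ)
    (hψ : ∀ i j k, ψ (i, j, k) = a i * b j * c k)
    (ρ : Matrix (Fin d₁ × Fin d₂ × Fin d₃) (Fin d₁ × Fin d₂ × Fin d₃) ℂ)
    (hρ : ∀ u v, ρ u v = ψ u * (starRingEnd ℂ) (ψ v))
    (ρ₁₂ : Matrix (Fin d₁ × Fin d₂) (Fin d₁ × Fin d₂) ℂ)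
    (hρ₁₂ : ∀ i j i' j', ρ₁₂ (i, j) (i', j') = ∑ k, ρ (i, j, k) (i', j', k))
    (ρ₂₃ : Matrix (Fin d₂ × Fin d₃) (Fin d₂ × Fin d₃) ℂ)
    (hρ₂₃ : ∀ j k j' k', ρ₂₃ (j, k) (j', k') = ∑ i, ρ (i, j, k) (i, j', k'))
    (ρ₁₃ : Matrix (Fin d₁ × Fin d₃) (Fin d₁ × Fin d₃) ℂ)
    (hρ₁₃ : ∀ i k i' k', ρ₁₃ (i, k) (i', k') = ∑ j, ρ (i, j, k) (i', j, k'))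
    (P P' : Matrix (Fin d₁ × Fin d₁) (Fin d₁ × Fin d₁) ℂ)
    (hP : P = realign (PT1 ρ₁₃) * realign (PT1 (swapRe ρ₂₃)) *
      realign (PT1 (swapRe ρ₁₂)))
    (hP' : P' = (realign (PT1 ρ₁₂) * realign (PT1 (swapRe ρ₁₂))) ^ 2) :
    (∀ n : ℕ, 1 ≤ n → (P ^ n).trace = 1) ∧
    (∀ n : ℕ, 1 ≤ n → (P' ^ n).trace = 1) ∧
    (∀ μ ∈ spectrum ℂ P, μ = 0 ∨ μ = 1) ∧ (1 : ℂ) ∈ spectrum ℂ P ∧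
    (∀ μ ∈ spectrum ℂ P', μ = 0 ∨ μ = 1) ∧ (1 : ℂ) ∈ spectrum ℂ P' := by

  have ha1 := stmt17_sum_norm_one a ha
  have hb1 := stmt17_sum_norm_one b hb
  have hc1 := stmt17_sum_norm_one c hc
  have e1 : realign (PT1 ρ₁₃) =
      vecMulVec (fun p : Fin d₁ × Fin d₁ => a p.1 * (starRingEnd ℂ) (a p.2))
        (fun q : Fin d₃ × Fin d₃ => (starRingEnd ℂ) (c q.1) * c q.2) := by
    ext p q
    show ρ₁₃ (p.1, q.2) (p.2, q.1) = _
    rw [hρ₁₃]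
    have h : ∀ j, ρ (p.1, j, q.2) (p.2, j, q.1) =
        ((a p.1 * (starRingEnd ℂ) (a p.2)) * ((starRingEnd ℂ) (c q.1) * c q.2)) *
          (b j * (starRingEnd ℂ) (b j)) := by
      intro j; rw [hρ, hψ, hψ]; simp only [_root_.map_mul]; ring
    rw [Finset.sum_congr rfl fun j _ => h j, ← Finset.mul_sum, hb1, mul_one,
      vecMulVec_apply]
  have e2 : realign (PT1 (swapRe ρ₂₃)) =
      vecMulVec (fun p : Fin d₃ × Fin d₃ => c p.1 * (starRingEnd ℂ) (c p.2))
        (fun q : Fin d₂ × Fin d₂ => (starRingEnd ℂ) (b q.1) * b q.2) := by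
    ext p q
    show ρ₂₃ (q.2, p.1) (q.1, p.2) = _
    rw [hρ₂₃]
    have h : ∀ i, ρ (i, q.2, p.1) (i, q.1, p.2) =
        ((c p.1 * (starRingEnd ℂ) (c p.2)) * ((starRingEnd ℂ) (b q.1) * b q.2)) *
          (a i * (starRingEnd ℂ) (a i)) := by
      intro i; rw [hρ, hψ, hψ]; simp only [_root_.map_mul]; ring
    rw [Finset.sum_congr rfl fun i _ => h i, ← Finset.mul_sum, ha1, mul_one,
      vecMulVec_apply]
  have e3 : realign (PT1 (swapRe ρ₁₂)) =
      vecMulVec (fun p : Fin d₂ × Fin d₂ => b p.1 * (starRingEnd ℂ) (b p.2))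
        (fun q : Fin d₁ × Fin d₁ => (starRingEnd ℂ) (a q.1) * a q.2) := by
    ext p q
    show ρ₁₂ (q.2, p.1) (q.1, p.2) = _
    rw [hρ₁₂]
    have h : ∀ k, ρ (q.2, p.1, k) (q.1, p.2, k) =
        ((b p.1 * (starRingEnd ℂ) (b p.2)) * ((starRingEnd ℂ) (a q.1) * a q.2)) *
          (c k * (starRingEnd ℂ) (c k)) := by
      intro k; rw [hρ, hψ, hψ]; simp only [_root_.map_mul]; ring
    rw [Finset.sum_congr rfl fun k _ => h k, ← Finset.mul_sum, hc1, mul_one,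
      vecMulVec_apply]
  have e4 : realign (PT1 ρ₁₂) =
      vecMulVec (fun p : Fin d₁ × Fin d₁ => a p.1 * (starRingEnd ℂ) (a p.2))
        (fun q : Fin d₂ × Fin d₂ => (starRingEnd ℂ) (b q.1) * b q.2) := by
    ext p q
    show ρ₁₂ (p.1, q.2) (p.2, q.1) = _
    rw [hρ₁₂]
    have h : ∀ k, ρ (p.1, q.2, k) (p.2, q.1, k) =
        ((a p.1 * (starRingEnd ℂ) (a p.2)) * ((starRingEnd ℂ) (b q.1) * b q.2)) *
          (c k * (starRingEnd ℂ) (c k)) := by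
      intro k; rw [hρ, hψ, hψ]; simp only [_root_.map_mul]; ring
    rw [Finset.sum_congr rfl fun k _ => h k, ← Finset.mul_sum, hc1, mul_one,
      vecMulVec_apply]
  have ipa := stmt17_ip_one a ha1
  have ipb := stmt17_ip_one b hb1
  have ipc := stmt17_ip_one c hc1
  set Q := vecMulVec (fun p : Fin d₁ × Fin d₁ => a p.1 * (starRingEnd ℂ) (a p.2))
      (fun q : Fin d₁ × Fin d₁ => (starRingEnd ℂ) (a q.1) * a q.2) with hQdef
  have hQQ : Q * Q = Q := by
    rw [hQdef, stmt17_vv_mul_vv]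
    simp only [ipa, one_smul]
  have htr : Q.trace = 1 := by
    rw [hQdef, Matrix.trace]
    simp only [Matrix.diag_apply, vecMulVec_apply]
    rw [← ipa]
    exact Finset.sum_congr rfl fun x _ => by ring
  have hPQ : P = Q := by
    rw [hP, e1, e2, e3, stmt17_vv_mul_vv, ipc, one_smul, stmt17_vv_mul_vv, ipb,
      one_smul, ← hQdef]
  have hP'Q : P' = Q := by
    rw [hP', e4, e3, stmt17_vv_mul_vv]
    simp only [ipb, one_smul]
    rw [← hQdef, sq, hQQ]
  have hpow : ∀ n : ℕ, 1 ≤ n → Q ^ n = Q := by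
    intro n
    induction n with
    | zero => intro h; omega
    | succ m ih =>
      intro _
      rcases Nat.eq_zero_or_pos m with hm | hm
      · subst hm; rw [pow_one]
      · rw [pow_succ, ih hm, hQQ]
  have hspec0 : ∀ μ ∈ spectrum ℂ Q, μ = 0 ∨ μ = 1 := by
    intro μ hμ
    by_contra hcon
    push_neg at hcon
    obtain ⟨h0, h1⟩ := hcon
    have h10 : μ - 1 ≠ 0 := sub_ne_zero.mpr h1
    apply spectrum.mem_iff.mp hμ
    rw [Algebra.algebraMap_eq_smul_one]
    set α : ℂ := (μ * (μ - 1))⁻¹ with hα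
    set β : ℂ := μ⁻¹ with hβ
    have hs : μ * α - α - β = 0 := by
      rw [hα, hβ]; field_simp; ring
    have hmb : μ * β = 1 := mul_inv_cancel₀ h0
    have expand : (μ • (1 : Matrix (Fin d₁ × Fin d₁) (Fin d₁ × Fin d₁) ℂ) - Q) *
        (α • Q + β • 1) = (μ * α - α - β) • Q + (μ * β) • 1 := by
      simp only [sub_mul, mul_add, smul_mul_assoc, mul_smul_comm, one_mul, mul_one,
        smul_smul, hQQ]
      module
    have expand2 : (α • Q + β • 1) *
        (μ • (1 : Matrix (Fin d₁ × Fin d₁) (Fin d₁ × Fin d₁) ℂ) - Q) =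
        (μ * α - α - β) • Q + (μ * β) • 1 := by
      simp only [mul_sub, add_mul, smul_mul_assoc, mul_smul_comm, one_mul, mul_one,
        smul_smul, hQQ]
      module
    exact isUnit_iff_exists.mpr ⟨α • Q + β • 1,
      by rw [expand, hs, zero_smul, zero_add, hmb, one_smul],
      by rw [expand2, hs, zero_smul, zero_add, hmb, one_smul]⟩
  have hspec1 : (1 : ℂ) ∈ spectrum ℂ Q := by
    rw [spectrum.mem_iff]
    intro hu
    rw [_root_.map_one] at hu
    obtain ⟨B, hB⟩ := hu.exists_right_inv
    have hQ0 : Q = 0 := by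
      calc Q = Q * ((1 - Q) * B) := by rw [hB, mul_one]
        _ = (Q * (1 - Q)) * B := by rw [mul_assoc]
        _ = 0 := by rw [mul_sub, mul_one, hQQ, sub_self, zero_mul]
    rw [hQ0, Matrix.trace_zero] at htr
    exact one_ne_zero htr.symm
  refine ⟨?_, ?_, ?_, ?_, ?_, ?_⟩
  · intro n hn; rw [hPQ, hpow n hn]; exact htr
  · intro n hn; rw [hP'Q, hpow n hn]; exact htr
  · rw [hPQ]; exact hspec0
  · rw [hPQ]; exact hspec1
  · rw [hP'Q]; exact hspec0
  · rw [hP'Q]; exact hspec1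
end
end
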